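/- Let 1 ≤ p ≤ ∞, r ∈ ℕ₀, φ(x) = √(1-x²), and γ ≥ 0 with γ > r - 1. Suppose g : (-1,1) → ℝ has g^{(r)} locally absolutely continuous on (-1,1), g^{(r)}(0) = 0, and ‖φ^{r+1} g^{(r+1)}‖_{L_p[-1,1]} < ∞. Then ‖φ^γ g^{(r)}‖_{L_p[-1,1]} ≤ c(p,r,γ)·‖φ^{r+1} g^{(r+1)}‖_{L_p[-1,1]} for a constant c depending only on p, r, γ. -/

import Mathlib

open MeasureTheory
open scoped ENNReal NNReal

noncomputable def phi (x : ℝ) : ℝ := Real.sqrt (1 - x ^ 2)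


lemma phi_nonneg (x : ℝ) : 0 ≤ phi x := Real.sqrt_nonneg _

lemma phi_le_one (x : ℝ) : phi x ≤ 1 := by
  rw [phi]
  calc Real.sqrt (1 - x^2) ≤ Real.sqrt 1 := Real.sqrt_le_sqrt (by nlinarith [sq_nonneg x])
  _ = 1 := Real.sqrt_one

lemma phi_pos {x : ℝ} (hx : |x| < 1) : 0 < phi x := by
  rw [phi]
  have : x^2 < 1 := by nlinarith [sq_abs x, abs_nonneg x]
  exact Real.sqrt_pos.mpr (by linarith)

lemma phi_anti {t x : ℝ} (h : |t| ≤ |x|) : phi x ≤ phi t := by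
  apply Real.sqrt_le_sqrt
  have := sq_abs t; have := sq_abs x
  nlinarith [abs_nonneg t, abs_nonneg x]

lemma phi_pow_eq {x : ℝ} (hx : |x| ≤ 1) (n : ℕ) :
    phi x ^ n = (1 - x ^ 2) ^ ((n : ℝ) / 2) := by
  have h0 : (0:ℝ) ≤ 1 - x ^ 2 := by nlinarith [sq_abs x, abs_nonneg x]
  rw [phi, Real.sqrt_eq_rpow, ← Real.rpow_natCast ((1-x^2) ^ ((1:ℝ)/2)) n,
    ← Real.rpow_mul h0]
  ring_nf

lemma phi_rpow_eq {x : ℝ} (hx : |x| ≤ 1) (a : ℝ) :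
    phi x ^ a = (1 - x ^ 2) ^ (a / 2) := by
  have h0 : (0:ℝ) ≤ 1 - x ^ 2 := by nlinarith [sq_abs x, abs_nonneg x]
  rw [phi, Real.sqrt_eq_rpow, ← Real.rpow_mul h0]
  ring_nf

lemma one_sub_abs_le {x : ℝ} (hx : |x| ≤ 1) : 1 - |x| ≤ 1 - x ^ 2 := by
  nlinarith [sq_abs x, abs_nonneg x]

lemma sub_sq_le_two_mul {x : ℝ} (hx : |x| ≤ 1) : 1 - x ^ 2 ≤ 2 * (1 - |x|) := by
  nlinarith [sq_abs x, abs_nonneg x]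

lemma ftc_row {s' : ℝ} (hs : s' ≠ 1) {x : ℝ} (hx0 : 0 ≤ x) (hx1 : x < 1) :
    ∫ t in (0:ℝ)..x, (1-t)^(-s') = ((1-x)^(1-s') - 1)/(s'-1) := by
  have key : ∀ t ∈ Set.uIcc (0:ℝ) x,
      HasDerivAt (fun u => ((1-u)^(1-s') - 1)/(s'-1)) ((1-t)^(-s')) t := by
    intro t ht
    rw [Set.uIcc_of_le hx0] at ht
    have h1t : 0 < 1 - t := by have := ht.2; linarith
    have hinner : HasDerivAt (fun u : ℝ => 1 - u) (-1) t := by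
      simpa using (hasDerivAt_id t).const_sub 1
    have houter := (Real.hasDerivAt_rpow_const (p := 1 - s') (Or.inl h1t.ne')).comp t hinner
    have := (houter.sub_const 1).div_const (s' - 1)
    refine this.congr_deriv ?_
    have hs1 : s' - 1 ≠ 0 := sub_ne_zero.mpr hs
    rw [show 1 - s' - 1 = -s' by ring]
    field_simp
    ring
  have hcont : IntervalIntegrable (fun t => (1-t)^(-s')) volume 0 x := by
    apply ContinuousOn.intervalIntegrable
    intro t ht
    rw [Set.uIcc_of_le hx0] at ht
    have h1t : 0 < 1 - t := by have := ht.2; linarith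
    exact ((continuousAt_const.sub continuousAt_id).rpow_const
      (Or.inl h1t.ne')).continuousWithinAt
  have := intervalIntegral.integral_eq_sub_of_hasDerivAt key hcont
  rw [this]
  simp


lemma rowcont {s' : ℝ} {a b : ℝ} (h : ∀ t ∈ Set.uIcc a b, |t| < 1) :
    IntervalIntegrable (fun t => (1-|t|)^(-s')) volume a b := by
  apply ContinuousOn.intervalIntegrable
  intro t ht
  have h1t : 0 < 1 - |t| := by have := h t ht; linarith
  exact ((continuousAt_const.sub continuous_abs.continuousAt).rpow_const
      (Or.inl h1t.ne')).continuousWithinAt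

lemma rowReal {s' : ℝ} (hs : s' ≠ 1) {x : ℝ} (hx : |x| < 1) :
    ∫ t in Set.uIoc 0 x, (1-|t|)^(-s') = ((1-|x|)^(1-s') - 1)/(s'-1) := by
  rcases le_or_gt 0 x with hx0 | hx0
  · rw [Set.uIoc_of_le hx0, ← intervalIntegral.integral_of_le hx0]
    rw [intervalIntegral.integral_congr (g := fun t => (1-t)^(-s'))
      (fun t ht => by
        rw [Set.uIcc_of_le hx0] at ht
        rw [abs_of_nonneg ht.1])]
    rw [ftc_row hs hx0 (by rwa [abs_of_nonneg hx0] at hx), abs_of_nonneg hx0]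
  · rw [Set.uIoc_of_ge hx0.le, ← intervalIntegral.integral_of_le hx0.le]
    rw [intervalIntegral.integral_congr (g := fun t => (1-(-t))^(-s'))
      (fun t ht => by
        rw [Set.uIcc_of_le hx0.le] at ht
        rw [abs_of_nonpos ht.2])]
    rw [intervalIntegral.integral_comp_neg (fun t => (1-t)^(-s')), neg_zero]
    have hx0' : 0 ≤ -x := by linarith
    rw [ftc_row hs hx0' (by rwa [abs_of_neg hx0] at hx), abs_of_neg hx0]


lemma abs_le_of_uIcc {x t : ℝ} (ht : t ∈ Set.uIcc 0 x) : |t| ≤ |x| := by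
  rw [Set.uIcc_eq_union] at ht
  rcases ht with ht | ht
  · rw [abs_of_nonneg ht.1]; exact le_trans ht.2 (le_abs_self x)
  · rw [abs_of_nonpos ht.2]; exact le_trans (neg_le_neg ht.1) (neg_le_abs x)

lemma abs_le_of_uIoc {x t : ℝ} (ht : t ∈ Set.uIoc 0 x) : |t| ≤ |x| :=
  abs_le_of_uIcc (Set.uIoc_subset_uIcc ht)

lemma pointwise_inv_bound (r : ℕ) {s' : ℝ} (hs2 : ((r:ℝ)+1)/2 ≤ s') {t : ℝ}
    (ht : |t| < 1) :
    (ENNReal.ofReal (phi t ^ (r+1)))⁻¹ ≤ ENNReal.ofReal ((1-|t|)^(-s')) := by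
  have h1 : 0 < 1 - |t| := by linarith
  have hlow : (1-|t|)^(s') ≤ phi t ^ (r+1) := by
    rw [phi_pow_eq ht.le]
    calc (1-|t|)^(s') ≤ (1-|t|)^(((r:ℝ)+1)/2) :=
          Real.rpow_le_rpow_of_exponent_ge h1 (by have := abs_nonneg t; linarith) hs2
    _ ≤ (1 - t^2)^(((r:ℝ)+1)/2) :=
          Real.rpow_le_rpow h1.le (one_sub_abs_le ht.le) (by positivity)
    _ = (1 - t^2)^((((r:ℕ)+1 : ℕ) : ℝ)/2) := by push_cast; ring_nf
  calc (ENNReal.ofReal (phi t ^ (r+1)))⁻¹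
      ≤ (ENNReal.ofReal ((1-|t|)^(s')))⁻¹ :=
        ENNReal.inv_le_inv' (ENNReal.ofReal_le_ofReal hlow)
  _ = ENNReal.ofReal (((1-|t|)^(s'))⁻¹) := by
        rw [ENNReal.ofReal_inv_of_pos (Real.rpow_pos_of_pos h1 _)]
  _ = ENNReal.ofReal ((1-|t|)^(-s')) := by rw [← Real.rpow_neg h1.le]

lemma rowLint (r : ℕ) {s' : ℝ} (hs2 : ((r:ℝ)+1)/2 ≤ s') (hs1 : s' ≠ 1) {x : ℝ}
    (hx : |x| < 1) :
    ∫⁻ t in Set.uIoc 0 x, (ENNReal.ofReal (phi t ^ (r+1)))⁻¹ ≤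
      ENNReal.ofReal (((1-|x|)^(1-s') - 1)/(s'-1)) := by
  have h1 : ∫⁻ t in Set.uIoc 0 x, (ENNReal.ofReal (phi t ^ (r+1)))⁻¹ ≤
      ∫⁻ t in Set.uIoc 0 x, ENNReal.ofReal ((1-|t|)^(-s')) := by
    apply setLIntegral_mono' measurableSet_uIoc
    intro t ht
    exact pointwise_inv_bound r hs2 (lt_of_le_of_lt (abs_le_of_uIoc ht) hx)
  refine h1.trans ?_
  have hint : IntegrableOn (fun t => (1-|t|)^(-s')) (Set.uIoc 0 x) volume := by
    rw [← intervalIntegrable_iff]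
    exact rowcont (fun t ht => lt_of_le_of_lt (abs_le_of_uIcc ht) hx)
  rw [← ofReal_integral_eq_lintegral_ofReal hint
    ((ae_restrict_iff' measurableSet_uIoc).mpr (Filter.Eventually.of_forall
      fun t ht => Real.rpow_nonneg
        (by have := lt_of_le_of_lt (abs_le_of_uIoc ht) hx; linarith) _))]
  rw [rowReal hs1 hx]


lemma claimB (r : ℕ) (γ : ℝ) (hγ0 : 0 ≤ γ) (hγ : (r:ℝ) - 1 < γ) :
    ∃ C : ℝ, 0 ≤ C ∧ ∀ x : ℝ, |x| < 1 →
      (ENNReal.ofReal (phi x ^ γ)) *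
        ∫⁻ t in Set.uIoc 0 x, (ENNReal.ofReal (phi t ^ (r+1)))⁻¹ ≤
      ENNReal.ofReal C := by
  rcases eq_or_lt_of_le hγ0 with h0 | h0
  · -- γ = 0, hence r = 0
    have hr : r = 0 := by
      by_contra h
      have : (1:ℝ) ≤ (r:ℝ) := by exact_mod_cast Nat.one_le_iff_ne_zero.mpr h
      rw [← h0] at hγ; linarith
    subst hr
    refine ⟨2, by norm_num, fun x hx => ?_⟩
    have hrow := rowLint 0 (s' := 1/2) (by norm_num) (by norm_num) hx
    have hu : 0 < 1 - |x| := by linarith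
    calc ENNReal.ofReal (phi x ^ γ) * ∫⁻ t in Set.uIoc 0 x,
          (ENNReal.ofReal (phi t ^ (0+1)))⁻¹
        = ∫⁻ t in Set.uIoc 0 x, (ENNReal.ofReal (phi t ^ (0+1)))⁻¹ := by
          rw [← h0, Real.rpow_zero, ENNReal.ofReal_one, one_mul]
    _ ≤ ENNReal.ofReal (((1-|x|)^(1-(1:ℝ)/2) - 1)/((1:ℝ)/2-1)) := hrow
    _ ≤ ENNReal.ofReal 2 := by
          apply ENNReal.ofReal_le_ofReal
          have h1 : (0:ℝ) ≤ (1-|x|)^(1-(1:ℝ)/2) := Real.rpow_nonneg hu.le _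
          rw [div_le_iff_of_neg (by norm_num)]
          linarith
  · -- γ > 0
    refine ⟨2^(γ/2) * (2/γ), by positivity, fun x hx => ?_⟩
    have hs2 : ((r:ℝ)+1)/2 ≤ 1 + γ/2 := by linarith
    have hs1 : (1 + γ/2 : ℝ) ≠ 1 := by intro h; nlinarith
    have hrow := rowLint r hs2 hs1 hx
    have hu : 0 < 1 - |x| := by linarith
    calc ENNReal.ofReal (phi x ^ γ) * ∫⁻ t in Set.uIoc 0 x,
          (ENNReal.ofReal (phi t ^ (r+1)))⁻¹
        ≤ ENNReal.ofReal (phi x ^ γ) *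
          ENNReal.ofReal (((1-|x|)^(1-(1+γ/2)) - 1)/((1+γ/2)-1)) :=
          mul_le_mul_right hrow _
    _ = ENNReal.ofReal (phi x ^ γ * (((1-|x|)^(-(γ/2)) - 1)/(γ/2))) := by
          have e1 : 1-(1+γ/2) = -(γ/2) := by ring
          have e2 : (1+γ/2)-1 = γ/2 := by ring
          rw [e1, e2]
          exact (ENNReal.ofReal_mul (Real.rpow_nonneg (phi_nonneg x) γ)).symm
    _ ≤ ENNReal.ofReal (2^(γ/2) * (2/γ)) := by
          apply ENNReal.ofReal_le_ofReal
          have hphi : phi x ^ γ ≤ 2^(γ/2) * (1-|x|)^(γ/2) := by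
            rw [phi_rpow_eq hx.le, ← Real.mul_rpow (by norm_num) hu.le]
            exact Real.rpow_le_rpow (by nlinarith [sq_abs x, abs_nonneg x])
              (sub_sq_le_two_mul hx.le) (by positivity)
          have hq : ((1-|x|)^(-(γ/2)) - 1)/(γ/2) ≤ (2/γ) * (1-|x|)^(-(γ/2)) := by
            rw [div_le_iff₀ (by positivity)]
            have : (0:ℝ) ≤ (1-|x|)^(-(γ/2)) := Real.rpow_nonneg hu.le _
            have h22 : (2/γ) * (1-|x|)^(-(γ/2)) * (γ/2) = (1-|x|)^(-(γ/2)) := by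
              field_simp
            linarith [h22]
          have hqnn : (0:ℝ) ≤ ((1-|x|)^(-(γ/2)) - 1)/(γ/2) := by
            apply div_nonneg _ (by positivity)
            have : (1:ℝ) ≤ (1-|x|)^(-(γ/2)) :=
              Real.one_le_rpow_of_pos_of_le_one_of_nonpos hu
                (by have := abs_nonneg x; linarith) (by linarith)
            linarith
          calc phi x ^ γ * (((1-|x|)^(-(γ/2)) - 1)/(γ/2))
              ≤ (2^(γ/2) * (1-|x|)^(γ/2)) * ((2/γ) * (1-|x|)^(-(γ/2))) := by
                apply mul_le_mul hphi hq hqnn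
                positivity
          _ = 2^(γ/2) * (2/γ) * ((1-|x|)^(γ/2) * (1-|x|)^(-(γ/2))) := by ring
          _ = 2^(γ/2) * (2/γ) := by
                rw [← Real.rpow_add hu]
                simp

lemma schur (μ : Measure ℝ) [SigmaFinite μ] (K : ℝ → ℝ → ℝ≥0∞) (F : ℝ → ℝ≥0∞)
    (hK : Measurable (Function.uncurry K)) (hF : Measurable F)
    (A : ℝ≥0∞) (hA : A ≠ ⊤) (hrow : ∀ᵐ x ∂μ, ∫⁻ t, K x t ∂μ ≤ A)
    (hcol : ∀ᵐ t ∂μ, ∫⁻ x, K x t ∂μ ≤ A)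
    {q : ℝ} (hq : 1 ≤ q) :
    ∫⁻ x, (∫⁻ t, K x t * F t ∂μ) ^ q ∂μ ≤ A ^ q * ∫⁻ t, F t ^ q ∂μ := by
  have hKx : ∀ x, Measurable (K x) := fun x =>
    hK.comp measurable_prodMk_left
  have hKt : ∀ t, Measurable (fun x => K x t) := fun t =>
    hK.comp measurable_prodMk_right
  have hswap : ∀ (G : ℝ → ℝ≥0∞), Measurable G →
      ∫⁻ x, ∫⁻ t, K x t * G t ∂μ ∂μ = ∫⁻ t, (∫⁻ x, K x t ∂μ) * G t ∂μ := by
    intro G hG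
    rw [lintegral_lintegral_swap]
    · refine lintegral_congr fun t => ?_
      exact lintegral_mul_const (G t) (hKt t)
    · exact (hK.mul (hG.comp measurable_snd)).aemeasurable
  have hcolstep : ∀ (G : ℝ → ℝ≥0∞), Measurable G →
      ∫⁻ x, ∫⁻ t, K x t * G t ∂μ ∂μ ≤ A * ∫⁻ t, G t ∂μ := by
    intro G hG
    rw [hswap G hG, ← lintegral_const_mul' A G hA]
    refine lintegral_mono_ae ?_
    filter_upwards [hcol] with t ht
    exact mul_le_mul_left ht _
  rcases eq_or_lt_of_le hq with h1 | h1
  · -- q = 1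
    simp only [← h1, ENNReal.rpow_one]
    exact hcolstep F hF
  · -- 1 < q
    have hconj : q.HolderConjugate (q/(q-1)) := Real.HolderConjugate.conjExponent h1
    set q' : ℝ := q/(q-1) with hq'
    have hconj' : q'.HolderConjugate q := hconj.symm
    have hq0 : 0 < q := by linarith
    have hq'0 : 0 < q' := hconj'.pos
    -- Hölder, pointwise in x
    have key : ∀ᵐ x ∂μ, (∫⁻ t, K x t * F t ∂μ) ^ q ≤
        A ^ (q/q') * ∫⁻ t, K x t * F t ^ q ∂μ := by
      filter_upwards [hrow] with x hx
      have holder : ∫⁻ t, K x t * F t ∂μ ≤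
          (∫⁻ t, K x t ∂μ) ^ (1/q') * (∫⁻ t, K x t * F t ^ q ∂μ) ^ (1/q) := by
        have h := ENNReal.lintegral_mul_le_Lp_mul_Lq μ hconj'
          (f := fun t => (K x t) ^ (1/q')) (g := fun t => (K x t) ^ (1/q) * F t)
          ((hKx x).pow_const _).aemeasurable
          (((hKx x).pow_const _).mul hF).aemeasurable
        calc ∫⁻ t, K x t * F t ∂μ
            = ∫⁻ t, (K x t) ^ (1/q') * ((K x t) ^ (1/q) * F t) ∂μ := by
              refine lintegral_congr fun t => ?_
              rw [← mul_assoc, ← ENNReal.rpow_add_of_nonneg _ _ (by positivity) (by positivity)]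
              rw [show 1/q' + 1/q = 1 by
                have := hconj'.inv_add_inv_eq_one
                simpa [one_div] using this, ENNReal.rpow_one]
        _ ≤ (∫⁻ t, ((K x t) ^ (1/q')) ^ q' ∂μ) ^ (1/q') *
              (∫⁻ t, ((K x t) ^ (1/q) * F t) ^ q ∂μ) ^ (1/q) := h
        _ = (∫⁻ t, K x t ∂μ) ^ (1/q') * (∫⁻ t, K x t * F t ^ q ∂μ) ^ (1/q) := by
              congr 1
              · congr 1
                refine lintegral_congr fun t => ?_
                rw [← ENNReal.rpow_mul, one_div, inv_mul_cancel₀ hq'0.ne', ENNReal.rpow_one]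
              · congr 1
                refine lintegral_congr fun t => ?_
                rw [ENNReal.mul_rpow_of_nonneg _ _ hq0.le, ← ENNReal.rpow_mul,
                  one_div, inv_mul_cancel₀ hq0.ne', ENNReal.rpow_one]
      calc (∫⁻ t, K x t * F t ∂μ) ^ q
          ≤ ((∫⁻ t, K x t ∂μ) ^ (1/q') * (∫⁻ t, K x t * F t ^ q ∂μ) ^ (1/q)) ^ q :=
            ENNReal.rpow_le_rpow holder hq0.le
      _ = ((∫⁻ t, K x t ∂μ) ^ (1/q')) ^ q * ((∫⁻ t, K x t * F t ^ q ∂μ) ^ (1/q)) ^ q :=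
            ENNReal.mul_rpow_of_nonneg _ _ hq0.le
      _ = ((∫⁻ t, K x t ∂μ) ^ (1/q')) ^ q * ∫⁻ t, K x t * F t ^ q ∂μ := by
            congr 1
            rw [← ENNReal.rpow_mul, one_div, inv_mul_cancel₀ hq0.ne', ENNReal.rpow_one]
      _ ≤ (A ^ (1/q')) ^ q * ∫⁻ t, K x t * F t ^ q ∂μ :=
            mul_le_mul_left
              (ENNReal.rpow_le_rpow (ENNReal.rpow_le_rpow hx (by positivity)) hq0.le) _
      _ = A ^ (q/q') * ∫⁻ t, K x t * F t ^ q ∂μ := by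
            rw [← ENNReal.rpow_mul]
            congr 1
            ring
    calc ∫⁻ x, (∫⁻ t, K x t * F t ∂μ) ^ q ∂μ
        ≤ ∫⁻ x, A ^ (q/q') * ∫⁻ t, K x t * F t ^ q ∂μ ∂μ := lintegral_mono_ae key
    _ = A ^ (q/q') * ∫⁻ x, ∫⁻ t, K x t * F t ^ q ∂μ ∂μ :=
          lintegral_const_mul' _ _ (ENNReal.rpow_ne_top_of_nonneg (by positivity) hA)
    _ ≤ A ^ (q/q') * (A * ∫⁻ t, F t ^ q ∂μ) := by
          gcongr
          exact hcolstep (fun t => F t ^ q) (hF.pow_const _)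
    _ = A ^ q * ∫⁻ t, F t ^ q ∂μ := by
          rw [← mul_assoc]
          congr 1
          nth_rewrite 2 [← ENNReal.rpow_one A]
          rw [← ENNReal.rpow_add_of_nonneg _ _ (by positivity) (by positivity)]
          congr 1
          have h1' : q - 1 ≠ 0 := by intro h; rw [sub_eq_zero] at h; exact h1.ne' h
          rw [hq']
          field_simp
          ring


lemma claimC (r : ℕ) (γ : ℝ) (hγ0 : 0 ≤ γ) (hγ : (r:ℝ) - 1 < γ) {t : ℝ}
    (ht : |t| < 1) :
    ∫⁻ x in Set.Icc (-1:ℝ) 1, (Set.uIoc 0 x).indicator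
      (fun s => ENNReal.ofReal (phi x ^ γ) * (ENNReal.ofReal (phi s ^ (r+1)))⁻¹) t ≤ 1 := by
  have hu : 0 < 1 - t^2 := by nlinarith [sq_abs t, abs_nonneg t]
  have hphit : 0 < phi t := phi_pos ht
  have hphitpow : 0 < phi t ^ (r+1) := pow_pos hphit _
  set c : ℝ≥0∞ := ENNReal.ofReal (phi t ^ γ * (phi t ^ (r+1))⁻¹) with hc
  set S : Set ℝ := if 0 < t then Set.Ici t else Set.Iio t with hS
  have hSmeas : MeasurableSet S := by
    rw [hS]; split
    · exact measurableSet_Ici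
    · exact measurableSet_Iio
  have hpoint : ∀ x, (Set.uIoc 0 x).indicator
      (fun s => ENNReal.ofReal (phi x ^ γ) * (ENNReal.ofReal (phi s ^ (r+1)))⁻¹) t ≤
      S.indicator (fun _ => c) x := by
    intro x
    by_cases hmem : t ∈ Set.uIoc 0 x
    · rw [Set.indicator_of_mem hmem]
      have habs : |t| ≤ |x| := abs_le_of_uIoc hmem
      have hxS : x ∈ S := by
        rw [hS]
        rcases hmem with ⟨h1, h2⟩
        split
        · next h0 =>
          rcases le_or_gt x 0 with hx0 | hx0
          · exfalso; rw [max_eq_left hx0] at h2; linarith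
          · rw [max_eq_right hx0.le] at h2; exact h2
        · next h0 =>
          push_neg at h0
          simp only [Set.mem_Iio]
          rcases lt_or_ge x t with h | h
          · exact h
          · exfalso
            have : min 0 x ≤ x := min_le_right 0 x
            have hx0 : min 0 x < t := h1
            rcases le_or_gt 0 x with hx | hx
            · rw [min_eq_left hx] at hx0; linarith
            · rw [min_eq_right hx.le] at hx0; linarith
      rw [Set.indicator_of_mem hxS]
      rw [← ENNReal.ofReal_inv_of_pos hphitpow,
        ← ENNReal.ofReal_mul (Real.rpow_nonneg (phi_nonneg x) γ)]
      apply ENNReal.ofReal_le_ofReal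
      apply mul_le_mul_of_nonneg_right _ (by positivity)
      exact Real.rpow_le_rpow (phi_nonneg x) (phi_anti habs) hγ0
    · rw [Set.indicator_of_notMem hmem]
      exact zero_le
  calc ∫⁻ x in Set.Icc (-1:ℝ) 1, (Set.uIoc 0 x).indicator
        (fun s => ENNReal.ofReal (phi x ^ γ) * (ENNReal.ofReal (phi s ^ (r+1)))⁻¹) t
      ≤ ∫⁻ x in Set.Icc (-1:ℝ) 1, S.indicator (fun _ => c) x :=
        lintegral_mono hpoint
  _ = c * (volume.restrict (Set.Icc (-1:ℝ) 1)) S := by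
        rw [lintegral_indicator hSmeas, setLIntegral_const]
  _ ≤ c * ENNReal.ofReal (1 - |t|) := by
        gcongr
        rw [Measure.restrict_apply hSmeas]
        have hsub : S ∩ Set.Icc (-1:ℝ) 1 ⊆ if 0 < t then Set.Icc t 1 else Set.Icc (-1) t := by
          rw [hS]
          split
          · exact fun x hx => ⟨hx.1, hx.2.2⟩
          · exact fun x hx => ⟨hx.2.1, le_of_lt hx.1⟩
        refine le_trans (measure_mono hsub) ?_
        split
        · next h0 => rw [Real.volume_Icc, abs_of_pos h0]
        · next h0 =>
          push_neg at h0
          rw [Real.volume_Icc, abs_of_nonpos h0]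
          apply ENNReal.ofReal_le_ofReal; linarith
  _ ≤ 1 := by
        rw [hc, ← ENNReal.ofReal_mul (by positivity), ← ENNReal.ofReal_one]
        apply ENNReal.ofReal_le_ofReal
        have h1 : phi t ^ γ = (1-t^2) ^ (γ/2) := phi_rpow_eq ht.le γ
        have h2 : (phi t ^ (r+1) : ℝ)⁻¹ = (1-t^2) ^ (-(((r:ℝ)+1)/2)) := by
          rw [phi_pow_eq ht.le, ← Real.rpow_neg hu.le]
          push_cast
          ring_nf
        rw [h1, h2]
        calc (1-t^2)^(γ/2) * (1-t^2)^(-(((r:ℝ)+1)/2)) * (1 - |t|)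
            ≤ (1-t^2)^(γ/2) * (1-t^2)^(-(((r:ℝ)+1)/2)) * (1-t^2) := by
              apply mul_le_mul_of_nonneg_left (one_sub_abs_le ht.le) (by positivity)
        _ = (1-t^2) ^ (γ/2 + (-(((r:ℝ)+1)/2)) + 1) := by
              rw [Real.rpow_add hu, Real.rpow_add hu, Real.rpow_one]
        _ ≤ 1 := Real.rpow_le_one hu.le (by nlinarith [sq_nonneg t]) (by push_cast; linarith)


lemma claimA (r : ℕ) (γ : ℝ) (hγ0 : 0 ≤ γ) (g : ℝ → ℝ)
    (hFTC : ∀ x ∈ Set.Ioo (-1 : ℝ) 1, ∀ y ∈ Set.Ioo (-1 : ℝ) 1,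
        iteratedDeriv r g y - iteratedDeriv r g x =
          ∫ t in x..y, iteratedDeriv (r + 1) g t)
    (h0 : iteratedDeriv r g 0 = 0) {x : ℝ} (hx : x ∈ Set.Ioo (-1:ℝ) 1) :
    (‖phi x ^ γ * iteratedDeriv r g x‖₊ : ℝ≥0∞) ≤
      ∫⁻ t in Set.uIoc 0 x,
        (ENNReal.ofReal (phi x ^ γ) * (ENNReal.ofReal (phi t ^ (r+1)))⁻¹)
          * (‖phi t ^ (r+1) * iteratedDeriv (r+1) g t‖₊ : ℝ≥0∞) ∂volume := by
  have hxabs : |x| < 1 := abs_lt.mpr ⟨hx.1, hx.2⟩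
  have heq : iteratedDeriv r g x = ∫ t in (0:ℝ)..x, iteratedDeriv (r+1) g t := by
    have := hFTC 0 (by norm_num) x hx
    rw [h0, sub_zero] at this
    exact this
  have hnorm1 : (‖phi x ^ γ * iteratedDeriv r g x‖₊ : ℝ≥0∞) =
      ENNReal.ofReal (phi x ^ γ) * (‖iteratedDeriv r g x‖₊ : ℝ≥0∞) := by
    rw [nnnorm_mul, ENNReal.coe_mul, ← enorm_eq_nnnorm, Real.enorm_eq_ofReal (Real.rpow_nonneg (phi_nonneg x) γ)]
  have hnorm2 : (‖iteratedDeriv r g x‖₊ : ℝ≥0∞) ≤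
      ∫⁻ t in Set.uIoc 0 x, (‖iteratedDeriv (r+1) g t‖₊ : ℝ≥0∞) ∂volume := by
    rw [heq]
    rcases le_or_gt 0 x with hx0 | hx0
    · rw [intervalIntegral.integral_of_le hx0, Set.uIoc_of_le hx0]
      exact enorm_integral_le_lintegral_enorm _
    · rw [intervalIntegral.integral_symm, Set.uIoc_of_ge hx0.le,
        intervalIntegral.integral_of_le hx0.le, nnnorm_neg]
      exact enorm_integral_le_lintegral_enorm _
  rw [hnorm1]
  calc ENNReal.ofReal (phi x ^ γ) * (‖iteratedDeriv r g x‖₊ : ℝ≥0∞)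
      ≤ ENNReal.ofReal (phi x ^ γ) *
        ∫⁻ t in Set.uIoc 0 x, (‖iteratedDeriv (r+1) g t‖₊ : ℝ≥0∞) ∂volume :=
        mul_le_mul_right hnorm2 _
  _ = ∫⁻ t in Set.uIoc 0 x,
        ENNReal.ofReal (phi x ^ γ) * (‖iteratedDeriv (r+1) g t‖₊ : ℝ≥0∞) ∂volume :=
        (lintegral_const_mul' _ _ ENNReal.ofReal_ne_top).symm
  _ ≤ ∫⁻ t in Set.uIoc 0 x,
        (ENNReal.ofReal (phi x ^ γ) * (ENNReal.ofReal (phi t ^ (r+1)))⁻¹)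
          * (‖phi t ^ (r+1) * iteratedDeriv (r+1) g t‖₊ : ℝ≥0∞) ∂volume := by
      apply setLIntegral_mono' measurableSet_uIoc
      intro t ht
      have htabs : |t| < 1 := lt_of_le_of_lt (abs_le_of_uIoc ht) hxabs
      have hpt : 0 < phi t ^ (r+1) := pow_pos (phi_pos htabs) _
      have hv : (‖phi t ^ (r+1) * iteratedDeriv (r+1) g t‖₊ : ℝ≥0∞) =
          ENNReal.ofReal (phi t ^ (r+1)) * (‖iteratedDeriv (r+1) g t‖₊ : ℝ≥0∞) := by
        rw [nnnorm_mul, ENNReal.coe_mul, ← enorm_eq_nnnorm, Real.enorm_eq_ofReal hpt.le]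
      rw [hv, mul_assoc, ← mul_assoc (ENNReal.ofReal (phi t ^ (r+1)))⁻¹,
        ENNReal.inv_mul_cancel (by simpa using ENNReal.ofReal_pos.mpr hpt |>.ne')
          ENNReal.ofReal_ne_top, one_mul]

theorem stmt13 (p : ℝ≥0∞) (hp : 1 ≤ p) (r : ℕ) (γ : ℝ) (hγ0 : 0 ≤ γ)
    (hγ : (r : ℝ) - 1 < γ) :
    ∃ c : ℝ≥0, ∀ g : ℝ → ℝ,
      (∀ x ∈ Set.Ioo (-1 : ℝ) 1, ∀ y ∈ Set.Ioo (-1 : ℝ) 1,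
        iteratedDeriv r g y - iteratedDeriv r g x =
          ∫ t in x..y, iteratedDeriv (r + 1) g t) →
      iteratedDeriv r g 0 = 0 →
      eLpNorm (fun x => phi x ^ (r + 1) * iteratedDeriv (r + 1) g x) p
        (volume.restrict (Set.Icc (-1 : ℝ) 1)) ≠ ⊤ →
      eLpNorm (fun x => phi x ^ γ * iteratedDeriv r g x) p
        (volume.restrict (Set.Icc (-1 : ℝ) 1)) ≤
        c * eLpNorm (fun x => phi x ^ (r + 1) * iteratedDeriv (r + 1) g x) p
          (volume.restrict (Set.Icc (-1 : ℝ) 1)) := by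
  obtain ⟨C, hC0, hB⟩ := claimB r γ hγ0 hγ
  set A : ℝ≥0∞ := max (ENNReal.ofReal C) 1 with hAdef
  have hA : A ≠ ⊤ := by
    rw [hAdef]
    simp [ENNReal.ofReal_ne_top]
  refine ⟨A.toNNReal, ?_⟩
  intro g hFTC h0 hfin
  have hcoe : (A.toNNReal : ℝ≥0∞) = A := ENNReal.coe_toNNReal hA
  set μ : Measure ℝ := volume.restrict (Set.Icc (-1:ℝ) 1) with hμ
  set F : ℝ → ℝ≥0∞ := fun t => (‖phi t ^ (r+1) * iteratedDeriv (r+1) g t‖₊ : ℝ≥0∞)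
    with hFdef
  set K : ℝ → ℝ → ℝ≥0∞ := fun x t => (Set.uIoc 0 x).indicator
    (fun s => ENNReal.ofReal (phi x ^ γ) * (ENNReal.ofReal (phi s ^ (r+1)))⁻¹) t with hKdef
  have hphic : Continuous phi := Real.continuous_sqrt.comp (by continuity)
  have hHmeas : Measurable (iteratedDeriv (r+1) g) := by
    rw [iteratedDeriv_succ]; exact measurable_deriv _
  have hFmeas : Measurable F := ((hphic.pow (r+1)).measurable.mul hHmeas).enorm
  have hKmeas : Measurable (Function.uncurry K) := by
    have hrw : Function.uncurry K = fun p : ℝ × ℝ =>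
        Set.indicator {q : ℝ × ℝ | q.2 ∈ Set.uIoc 0 q.1}
          (fun q => ENNReal.ofReal (phi q.1 ^ γ) * (ENNReal.ofReal (phi q.2 ^ (r+1)))⁻¹)
          p := by
      funext q
      simp only [Function.uncurry, hKdef]
      by_cases hq : q.2 ∈ Set.uIoc 0 q.1
      · rw [Set.indicator_of_mem hq, Set.indicator_of_mem (by exact hq)]
      · rw [Set.indicator_of_notMem hq, Set.indicator_of_notMem (by exact hq)]
    rw [hrw]
    apply Measurable.indicator
    · apply Measurable.mul
      · exact ENNReal.measurable_ofReal.comp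
          (((hphic.rpow_const (fun x => Or.inr hγ0)).comp continuous_fst).measurable)
      · exact (ENNReal.measurable_ofReal.comp
          (((hphic.pow (r+1)).comp continuous_snd).measurable)).inv
    · have hset : {q : ℝ × ℝ | q.2 ∈ Set.uIoc 0 q.1} =
          {q : ℝ × ℝ | min 0 q.1 < q.2} ∩ {q : ℝ × ℝ | q.2 ≤ max 0 q.1} := by
        ext q
        simp only [Set.mem_setOf_eq, Set.uIoc, Set.mem_Ioc, Set.mem_inter_iff]
      rw [hset]
      exact ((measurableSet_lt (measurable_const.min measurable_fst) measurable_snd).inter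
        (measurableSet_le measurable_snd (measurable_const.max measurable_fst)))
  have hIoo : ∀ᵐ x ∂μ, x ∈ Set.Ioo (-1:ℝ) 1 := by
    have h1 : ∀ᵐ x ∂μ, x ∈ Set.Icc (-1:ℝ) 1 := ae_restrict_mem measurableSet_Icc
    have h2 : ∀ᵐ (x:ℝ) ∂volume, x ∉ ({-1, 1} : Set ℝ) := by
      rw [ae_iff]
      simp only [not_not]
      refine measure_mono_null (fun x hx => hx) ?_
      exact (Set.toFinite ({-1, 1} : Set ℝ)).measure_zero volume
    have h2' : ∀ᵐ x ∂μ, x ∉ ({-1, 1} : Set ℝ) := ae_restrict_of_ae h2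
    filter_upwards [h1, h2'] with x hx1 hx2
    simp only [Set.mem_insert_iff, Set.mem_singleton_iff, not_or] at hx2
    exact ⟨lt_of_le_of_ne hx1.1 (Ne.symm hx2.1), lt_of_le_of_ne hx1.2 hx2.2⟩
  have hsubIcc : ∀ {x : ℝ}, x ∈ Set.Ioo (-1:ℝ) 1 →
      Set.uIoc 0 x ⊆ Set.Icc (-1:ℝ) 1 := by
    intro x hx t ht
    have h1 := abs_le_of_uIoc ht
    have h2 : |x| < 1 := abs_lt.mpr ⟨hx.1, hx.2⟩
    have h3 := abs_le.mp (le_of_lt (lt_of_le_of_lt h1 h2))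
    exact ⟨h3.1, h3.2⟩
  have hres : ∀ (G : ℝ → ℝ≥0∞) {x : ℝ}, x ∈ Set.Ioo (-1:ℝ) 1 →
      ∫⁻ t, K x t * G t ∂μ = ∫⁻ t in Set.uIoc 0 x,
        (ENNReal.ofReal (phi x ^ γ) * (ENNReal.ofReal (phi t ^ (r+1)))⁻¹) * G t
          ∂volume := by
    intro G x hx
    have hind : ∀ t, K x t * G t = (Set.uIoc 0 x).indicator
        (fun s => (ENNReal.ofReal (phi x ^ γ) * (ENNReal.ofReal (phi s ^ (r+1)))⁻¹)
          * G s) t := by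
      intro t
      simp only [hKdef]
      by_cases hq : t ∈ Set.uIoc 0 x
      · rw [Set.indicator_of_mem hq, Set.indicator_of_mem hq]
      · rw [Set.indicator_of_notMem hq, Set.indicator_of_notMem hq, zero_mul]
    simp_rw [hind]
    rw [lintegral_indicator measurableSet_uIoc,
      hμ, Measure.restrict_restrict measurableSet_uIoc,
      Set.inter_eq_self_of_subset_left (hsubIcc hx)]
  have hresK : ∀ {x : ℝ}, x ∈ Set.Ioo (-1:ℝ) 1 →
      ∫⁻ t, K x t ∂μ = ∫⁻ t in Set.uIoc 0 x,
        ENNReal.ofReal (phi x ^ γ) * (ENNReal.ofReal (phi t ^ (r+1)))⁻¹ ∂volume := by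
    intro x hx
    have := hres (fun _ => 1) hx
    simpa using this
  have hrow : ∀ᵐ x ∂μ, ∫⁻ t, K x t ∂μ ≤ A := by
    filter_upwards [hIoo] with x hx
    rw [hresK hx, lintegral_const_mul' _ _ ENNReal.ofReal_ne_top]
    exact le_trans (hB x (abs_lt.mpr ⟨hx.1, hx.2⟩)) (le_max_left _ _)
  have hcol : ∀ᵐ t ∂μ, ∫⁻ x, K x t ∂μ ≤ A := by
    filter_upwards [hIoo] with t ht
    refine le_trans ?_ (le_max_right (ENNReal.ofReal C) 1)
    simp only [hKdef, hμ]
    exact claimC r γ hγ0 hγ (abs_lt.mpr ⟨ht.1, ht.2⟩)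
  have hptwise : ∀ᵐ x ∂μ, (‖phi x ^ γ * iteratedDeriv r g x‖₊ : ℝ≥0∞) ≤
      ∫⁻ t, K x t * F t ∂μ := by
    filter_upwards [hIoo] with x hx
    rw [hres F hx]
    exact claimA r γ hγ0 g hFTC h0 hx
  by_cases hptop : p = ∞
  · subst hptop
    rw [eLpNorm_exponent_top, eLpNorm_exponent_top]
    have hS : eLpNormEssSup (fun x => phi x ^ (r+1) * iteratedDeriv (r+1) g x) μ
        = essSup F μ := rfl
    rw [hS, hcoe]
    refine essSup_le_of_ae_le _ ?_
    filter_upwards [hptwise, hrow] with x h1 h2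
    calc ((‖phi x ^ γ * iteratedDeriv r g x‖₊ : ℝ≥0∞))
        ≤ ∫⁻ t, K x t * F t ∂μ := h1
    _ ≤ ∫⁻ t, K x t * essSup F μ ∂μ := by
        refine lintegral_mono_ae ?_
        filter_upwards [ENNReal.ae_le_essSup (μ := μ) F] with t ht3
        exact mul_le_mul_right ht3 _
    _ = (∫⁻ t, K x t ∂μ) * essSup F μ :=
        lintegral_mul_const _ (hKmeas.comp measurable_prodMk_left)
    _ ≤ A * essSup F μ := mul_le_mul_left h2 _
  · have hp0 : p ≠ 0 := by
      intro h; rw [h] at hp; simp at hp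
    set q : ℝ := p.toReal with hqdef
    have hq1 : 1 ≤ q := by
      rw [hqdef, ← ENNReal.toReal_one]
      exact ENNReal.toReal_mono hptop hp
    have hq0 : 0 < q := lt_of_lt_of_le zero_lt_one hq1
    rw [eLpNorm_eq_lintegral_rpow_enorm_toReal hp0 hptop,
      eLpNorm_eq_lintegral_rpow_enorm_toReal hp0 hptop, hcoe]
    have hschur := schur μ K F hKmeas hFmeas A hA hrow hcol hq1
    calc (∫⁻ x, (‖phi x ^ γ * iteratedDeriv r g x‖₊ : ℝ≥0∞) ^ q ∂μ) ^ (1/q)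
        ≤ (∫⁻ x, (∫⁻ t, K x t * F t ∂μ) ^ q ∂μ) ^ (1/q) := by
          refine ENNReal.rpow_le_rpow ?_ (by positivity)
          refine lintegral_mono_ae ?_
          filter_upwards [hptwise] with x hx
          exact ENNReal.rpow_le_rpow hx hq0.le
    _ ≤ (A ^ q * ∫⁻ t, F t ^ q ∂μ) ^ (1/q) := ENNReal.rpow_le_rpow hschur (by positivity)
    _ = A * (∫⁻ t, F t ^ q ∂μ) ^ (1/q) := by
          rw [ENNReal.mul_rpow_of_nonneg _ _ (by positivity), ← ENNReal.rpow_mul,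
            mul_one_div_cancel hq0.ne', ENNReal.rpow_one]
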